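/- For all integers k, ℓ ≥ 1, one has [I_k, I_ℓ] ⊆ I_{k+ℓ−1}, i.e. [x, y] ∈ I_{k+ℓ−1} for all x ∈ I_ℓ and y ∈ I_k. -/
import Mathlib


/-- `T_k(u,r,m₁,…,m_k) = ∑_{S ⊆ {1,…,k}} (−1)^{|S|} T(u, r + ∑_{i∈S} mᵢ)`. -/
noncomputable def Tk {d : ℕ} {L : Type*} [AddCommGroup L] [Module ℂ L]
    (T : (Fin d → ℂ) → (Fin d → ℤ) → L) (k : ℕ)
    (u : Fin d → ℂ) (r : Fin d → ℤ) (m : Fin k → Fin d → ℤ) : L :=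
  ∑ S : Finset (Fin k), ((-1 : ℂ) ^ S.card) • T u (r + ∑ i ∈ S, m i)

/-- `I_k`, the `ℂ`-linear span of all `T_k(u,r,m₁,…,m_k)` with `u ∈ ℂ^d` and
`r, m₁,…,m_k ∈ ℤ^d`. -/
noncomputable def Ik {d : ℕ} {L : Type*} [AddCommGroup L] [Module ℂ L]
    (T : (Fin d → ℂ) → (Fin d → ℤ) → L) (k : ℕ) : Submodule ℂ L :=
  Submodule.span ℂ
    {x : L | ∃ (u : Fin d → ℂ) (r : Fin d → ℤ) (m : Fin k → Fin d → ℤ),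
      x = Tk T k u r m}

namespace IkAux

/-- the sign of a boolean vector -/
def sg {k : ℕ} (f : Fin k → Bool) : ℂ := ∏ i, if f i then (-1 : ℂ) else 1

/-- the shift point of a boolean vector -/
def pt {d k : ℕ} (m : Fin k → Fin d → ℤ) (f : Fin k → Bool) : Fin d → ℤ :=
  ∑ i, if f i then m i else 0

def boolEquiv (k : ℕ) : Finset (Fin k) ≃ (Fin k → Bool) where
  toFun S i := decide (i ∈ S)
  invFun f := Finset.univ.filter (fun i => f i = true)
  left_inv S := by ext i; simp
  right_inv f := by funext i; simp

lemma sg_boolEquiv {k : ℕ} (S : Finset (Fin k)) :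
    sg (boolEquiv k S) = (-1 : ℂ) ^ S.card := by
  unfold sg boolEquiv
  simp only [Equiv.coe_fn_mk, decide_eq_true_eq]
  rw [Finset.prod_ite_mem, Finset.univ_inter, Finset.prod_const]

lemma pt_boolEquiv {d k : ℕ} (m : Fin k → Fin d → ℤ) (S : Finset (Fin k)) :
    pt m (boolEquiv k S) = ∑ i ∈ S, m i := by
  unfold pt boolEquiv
  simp only [Equiv.coe_fn_mk, decide_eq_true_eq]
  rw [Finset.sum_ite_mem, Finset.univ_inter]

lemma Tk_eq {d : ℕ} {L : Type*} [AddCommGroup L] [Module ℂ L]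
    (T : (Fin d → ℂ) → (Fin d → ℤ) → L) (k : ℕ)
    (u : Fin d → ℂ) (r : Fin d → ℤ) (m : Fin k → Fin d → ℤ) :
    Tk T k u r m = ∑ f : Fin k → Bool, sg f • T u (r + pt m f) := by
  rw [Tk, ← Fintype.sum_equiv (boolEquiv k)
    (fun S => ((-1 : ℂ) ^ S.card) • T u (r + ∑ i ∈ S, m i))
    (fun f => sg f • T u (r + pt m f))
    (fun S => by simp only [sg_boolEquiv, pt_boolEquiv])]

lemma sum_insertNth {k : ℕ} {M : Type*} [AddCommMonoid M] (j : Fin (k + 1))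
    (F : (Fin (k + 1) → Bool) → M) :
    ∑ f, F f = ∑ f : Fin k → Bool, (F (j.insertNth true f) + F (j.insertNth false f)) := by
  rw [← Equiv.sum_comp (Fin.insertNthEquiv (fun _ => Bool) j) F, Fintype.sum_prod_type,
    Fintype.sum_bool]
  rw [← Finset.sum_add_distrib]
  rfl

lemma sg_insertNth {k : ℕ} (j : Fin (k + 1)) (b : Bool) (f : Fin k → Bool) :
    sg (j.insertNth b f) = (if b then (-1 : ℂ) else 1) * sg f := by
  unfold sg
  rw [Fin.prod_univ_succAbove _ j]
  simp [Fin.insertNth_apply_same, Fin.insertNth_apply_succAbove]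

lemma pt_insertNth {d k : ℕ} (j : Fin (k + 1)) (b : Bool) (m : Fin (k + 1) → Fin d → ℤ)
    (f : Fin k → Bool) :
    pt m (j.insertNth b f) = (if b then m j else 0) + pt (j.removeNth m) f := by
  unfold pt
  rw [Fin.sum_univ_succAbove _ j]
  simp [Fin.insertNth_apply_same, Fin.insertNth_apply_succAbove, Fin.removeNth]

lemma sg_cons {k : ℕ} (b : Bool) (f : Fin k → Bool) :
    sg (Fin.cons b f) = (if b then (-1 : ℂ) else 1) * sg f := by
  unfold sg
  rw [Fin.prod_univ_succ]
  simp

lemma sum_sg {k : ℕ} (hk : 1 ≤ k) : ∑ f : Fin k → Bool, sg f = 0 := by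
  obtain ⟨k', rfl⟩ : ∃ k', k = k' + 1 := ⟨k - 1, by omega⟩
  rw [sum_insertNth 0]
  simp [sg_cons]


variable {d : ℕ} {L : Type*} [AddCommGroup L] [Module ℂ L]
variable (T : (Fin d → ℂ) → (Fin d → ℤ) → L)

lemma Tk_insertNth (k : ℕ) (j : Fin (k + 1)) (u : Fin d → ℂ) (r a : Fin d → ℤ)
    (m : Fin k → Fin d → ℤ) :
    Tk T (k + 1) u r (j.insertNth a m) = Tk T k u r m - Tk T k u (r + a) m := by
  rw [Tk_eq, Tk_eq, Tk_eq, sum_insertNth j, ← Finset.sum_sub_distrib]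
  refine Finset.sum_congr rfl fun f _ => ?_
  rw [sg_insertNth, pt_insertNth, sg_insertNth, pt_insertNth, Fin.removeNth_insertNth]
  simp only [Fin.insertNth_apply_same, Bool.false_eq_true, if_true, if_false, neg_one_mul,
    one_mul, neg_smul, zero_add]
  rw [show r + (a + pt m f) = r + a + pt m f by abel]
  abel

lemma Ik_mono (k : ℕ) : Ik T (k + 1) ≤ Ik T k := by
  rw [Ik, Submodule.span_le]
  rintro x ⟨u, r, m, rfl⟩
  rw [← Fin.insertNth_self_removeNth 0 m, Tk_insertNth]
  exact sub_mem (Submodule.subset_span ⟨u, r, _, rfl⟩)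
    (Submodule.subset_span ⟨u, r + m 0, _, rfl⟩)

lemma Dgen (l : ℕ) : ∀ (k : ℕ) (u : Fin d → ℂ) (r : Fin d → ℤ)
    (m : Fin k → Fin d → ℤ) (n : Fin l → Fin d → ℤ),
    (∑ g : Fin l → Bool, sg g • Tk T k u (r + pt n g) m) ∈ Ik T (k + l) := by
  induction l with
  | zero =>
    intro k u r m n
    have : ∑ g : Fin 0 → Bool, sg g • Tk T k u (r + pt n g) m = Tk T k u (r + pt n default) m := by
      rw [Fintype.sum_eq_single default (fun g => by
        simp [Subsingleton.elim g default])]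
      simp [sg]
    rw [this]
    exact Submodule.subset_span ⟨u, r + pt n default, m, rfl⟩
  | succ l ih =>
    intro k u r m n
    rw [sum_insertNth 0]
    have key : ∀ g : Fin l → Bool,
        sg (Fin.insertNth 0 true g) • Tk T k u (r + pt n (Fin.insertNth 0 true g)) m
          + sg (Fin.insertNth 0 false g) • Tk T k u (r + pt n (Fin.insertNth 0 false g)) m
        = sg g • Tk T (k + 1) u (r + pt (Fin.removeNth 0 n) g)
            (Fin.insertNth 0 (n 0) m) := by
      intro g
      rw [sg_insertNth, pt_insertNth, sg_insertNth, pt_insertNth, Tk_insertNth]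
      simp only [Fin.insertNth_apply_same, Bool.false_eq_true, if_true, if_false, neg_one_mul,
        one_mul, neg_smul, zero_add, smul_sub]
      rw [show r + (n 0 + pt (Fin.removeNth 0 n) g) = r + pt (Fin.removeNth 0 n) g + n 0 by abel]
      abel
    rw [Finset.sum_congr rfl fun g _ => key g]
    have h := ih (k + 1) u r (Fin.insertNth 0 (n 0) m) (Fin.removeNth 0 n)
    rwa [show k + 1 + l = k + (l + 1) by omega] at h

/-- complex pairing of `v` with an integer vector -/
noncomputable def dotC {d : ℕ} (v : Fin d → ℂ) (x : Fin d → ℤ) : ℂ := ∑ i, v i * (x i : ℂ)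

lemma dotC_pt {d k : ℕ} (v : Fin d → ℂ) (m : Fin k → Fin d → ℤ) (f : Fin k → Bool) :
    dotC v (pt m f) = ∑ j, if f j then dotC v (m j) else 0 := by
  unfold dotC pt
  simp only [Finset.sum_apply, Int.cast_sum, Finset.mul_sum]
  rw [Finset.sum_comm]
  refine Finset.sum_congr rfl fun j _ => ?_
  by_cases h : f j <;> simp [h, dotC]

lemma dotC_add {d : ℕ} (v : Fin d → ℂ) (x y : Fin d → ℤ) :
    dotC v (x + y) = dotC v x + dotC v y := by
  unfold dotC
  rw [← Finset.sum_add_distrib]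
  refine Finset.sum_congr rfl fun i _ => ?_
  simp only [Pi.add_apply]
  push_cast
  ring

lemma memX {d : ℕ} {L : Type*} [AddCommGroup L] [Module ℂ L]
    (T : (Fin d → ℂ) → (Fin d → ℤ) → L) (k' l : ℕ)
    (u v : Fin d → ℂ) (b r : Fin d → ℤ)
    (m : Fin (k' + 1) → Fin d → ℤ) (n : Fin l → Fin d → ℤ) :
    (∑ g : Fin l → Bool, ∑ f : Fin (k' + 1) → Bool,
      ((sg g * sg f) * dotC v (r + pt m f)) • T u ((b + pt n g) + pt m f)) ∈ Ik T (k' + l) := by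
  have expand : ∀ (g : Fin l → Bool) (f : Fin (k' + 1) → Bool),
      ((sg g * sg f) * dotC v (r + pt m f)) • T u ((b + pt n g) + pt m f)
      = ((sg g * sg f) * dotC v r) • T u ((b + pt n g) + pt m f)
        + ∑ j : Fin (k' + 1),
            ((sg g * sg f) * (if f j then dotC v (m j) else 0)) • T u ((b + pt n g) + pt m f) := by
    intro g f
    rw [dotC_add, dotC_pt, mul_add, add_smul, Finset.mul_sum, Finset.sum_smul]
  simp only [expand, Finset.sum_add_distrib]
  refine Submodule.add_mem _ ?_ ?_
  · -- the `dotC v r` part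
    have e0 : (∑ g : Fin l → Bool, ∑ f : Fin (k' + 1) → Bool,
        ((sg g * sg f) * dotC v r) • T u ((b + pt n g) + pt m f))
        = dotC v r • ∑ g : Fin l → Bool, sg g • Tk T (k' + 1) u (b + pt n g) m := by
      rw [Finset.smul_sum]
      refine Finset.sum_congr rfl fun g _ => ?_
      rw [Tk_eq, Finset.smul_sum, Finset.smul_sum]
      refine Finset.sum_congr rfl fun f _ => ?_
      rw [smul_smul, smul_smul]
      congr 1
      ring
    rw [e0]
    refine Submodule.smul_mem _ _ ?_
    have h := Dgen T l (k' + 1) u b m n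
    have hm := Ik_mono T (k' + l)
    rw [show k' + 1 + l = k' + l + 1 by omega] at h
    exact hm h
  · -- the difference part
    have e1 : ∀ (j : Fin (k' + 1)) (g : Fin l → Bool),
        (∑ f : Fin (k' + 1) → Bool,
          ((sg g * sg f) * (if f j then dotC v (m j) else 0)) • T u ((b + pt n g) + pt m f))
        = ∑ f : Fin k' → Bool,
            (-(dotC v (m j))) • (sg g • (sg f • T u (((b + m j) + pt n g) + pt (j.removeNth m) f))) := by
      intro j g
      rw [sum_insertNth j]
      refine Finset.sum_congr rfl fun f _ => ?_
      rw [sg_insertNth, pt_insertNth, sg_insertNth, pt_insertNth]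
      simp only [Fin.insertNth_apply_same, if_true, Bool.false_eq_true, if_false, mul_zero,
        zero_smul, add_zero]
      rw [show (b + pt n g) + (m j + pt (j.removeNth m) f)
            = ((b + m j) + pt n g) + pt (j.removeNth m) f by abel]
      rw [smul_smul, smul_smul]
      congr 1
      ring
    have e2 : (∑ g : Fin l → Bool, ∑ f : Fin (k' + 1) → Bool, ∑ j : Fin (k' + 1),
          ((sg g * sg f) * (if f j then dotC v (m j) else 0)) • T u ((b + pt n g) + pt m f))
        = ∑ j : Fin (k' + 1), (-(dotC v (m j)))
            • ∑ g : Fin l → Bool, sg g • Tk T k' u ((b + m j) + pt n g) (j.removeNth m) := by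
      rw [Finset.sum_congr rfl fun g _ => Finset.sum_comm, Finset.sum_comm]
      refine Finset.sum_congr rfl fun j _ => ?_
      rw [Finset.sum_congr rfl fun g _ => e1 j g, Finset.smul_sum]
      refine Finset.sum_congr rfl fun g _ => ?_
      rw [Tk_eq, Finset.smul_sum, Finset.smul_sum]
    rw [e2]
    exact Submodule.sum_mem _ fun j _ =>
      Submodule.smul_mem _ _ (Dgen T l k' u (b + m j) (j.removeNth m) n)
lemma sum_zero_aux {M : Type*} [AddCommGroup M] [Module ℂ M] {k : ℕ} (hk : 1 ≤ k)
    (c : ℂ) (x : M) : ∑ f : Fin k → Bool, (c * sg f) • x = 0 := by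
  rw [← Finset.sum_smul, ← Finset.mul_sum, sum_sg hk, mul_zero, zero_smul]

lemma Tlin {d : ℕ} {L : Type*} [AddCommGroup L] [Module ℂ L]
    (T : (Fin d → ℂ) → (Fin d → ℤ) → L)
    (hlin : ∀ r : Fin d → ℤ, IsLinearMap ℂ (fun u => T u r))
    (a c : ℂ) (u v : Fin d → ℂ) (z : Fin d → ℤ) :
    T (a • u - c • v) z = a • T u z - c • T v z := by
  have h := hlin z
  calc T (a • u - c • v) z = (IsLinearMap.mk' _ h) (a • u - c • v) := rfl
    _ = a • T u z - c • T v z := by rw [map_sub, map_smul, map_smul]; rfl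

lemma sum_lie' {L : Type*} [LieRing L] {ι : Type*} (s : Finset ι) (f : ι → L) (y : L) :
    ⁅∑ i ∈ s, f i, y⁆ = ∑ i ∈ s, ⁅f i, y⁆ :=
  map_sum (AddMonoidHom.mk' (fun x => ⁅x, y⁆) fun a b => add_lie a b y) f s

lemma lie_sum' {L : Type*} [LieRing L] {ι : Type*} (s : Finset ι) (f : ι → L) (y : L) :
    ⁅y, ∑ i ∈ s, f i⁆ = ∑ i ∈ s, ⁅y, f i⁆ :=
  map_sum (AddMonoidHom.mk' (fun x => ⁅y, x⁆) fun a b => lie_add y a b) f s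

lemma gen_bracket {d : ℕ} {L : Type*} [LieRing L] [LieAlgebra ℂ L]
    (T : (Fin d → ℂ) → (Fin d → ℤ) → L)
    (hlin : ∀ r : Fin d → ℤ, IsLinearMap ℂ (fun u => T u r))
    (hbr : ∀ (u v : Fin d → ℂ) (r s : Fin d → ℤ),
      ⁅T v s, T u r⁆
        = (∑ i, u i * (s i : ℂ)) • T v s - (∑ i, v i * (r i : ℂ)) • T u r
          + T ((∑ i, v i * (r i : ℂ)) • u - (∑ i, u i * (s i : ℂ)) • v) (r + s))
    (k' l' : ℕ) (u v : Fin d → ℂ) (r s : Fin d → ℤ)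
    (m : Fin (k' + 1) → Fin d → ℤ) (n : Fin (l' + 1) → Fin d → ℤ) :
    ⁅Tk T (l' + 1) v s n, Tk T (k' + 1) u r m⁆ ∈ Ik T (k' + l' + 1) := by
  have hbr' : ∀ (u v : Fin d → ℂ) (r s : Fin d → ℤ),
      ⁅T v s, T u r⁆
        = dotC u s • T v s - dotC v r • T u r
          + T (dotC v r • u - dotC u s • v) (r + s) := hbr
  have hterm : ∀ (f : Fin (k' + 1) → Bool) (g : Fin (l' + 1) → Bool),
      (sg f * sg g) • ⁅T v (s + pt n g), T u (r + pt m f)⁆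
      = ((sg f * sg g) * dotC u (s + pt n g)) • T v (s + pt n g)
        - ((sg f * sg g) * dotC v (r + pt m f)) • T u (r + pt m f)
        + (((sg f * sg g) * dotC v (r + pt m f)) • T u (((r + s) + pt n g) + pt m f)
          - ((sg f * sg g) * dotC u (s + pt n g)) • T v (((r + s) + pt m f) + pt n g)) := by
    intro f g
    rw [hbr', Tlin T hlin]
    rw [show (r + pt m f) + (s + pt n g) = ((r + s) + pt n g) + pt m f by abel]
    rw [show T v (((r + s) + pt n g) + pt m f) = T v (((r + s) + pt m f) + pt n g) from
      congrArg _ (by abel)]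
    simp only [smul_sub, smul_add, smul_smul]
  rw [Tk_eq, Tk_eq]
  simp only [sum_lie', lie_sum', smul_lie, lie_smul, smul_smul]
  simp only [Finset.smul_sum, smul_smul]
  simp only [hterm, Finset.sum_add_distrib, Finset.sum_sub_distrib]
  have z1 : (∑ f : Fin (k' + 1) → Bool, ∑ g : Fin (l' + 1) → Bool,
      ((sg f * sg g) * dotC u (s + pt n g)) • T v (s + pt n g)) = 0 := by
    rw [Finset.sum_comm]
    refine Finset.sum_eq_zero fun g _ => ?_
    calc ∑ f : Fin (k' + 1) → Bool, ((sg f * sg g) * dotC u (s + pt n g)) • T v (s + pt n g)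
        = ∑ f : Fin (k' + 1) → Bool,
            ((sg g * dotC u (s + pt n g)) * sg f) • T v (s + pt n g) :=
          Finset.sum_congr rfl fun f _ => by rw [show (sg f * sg g) * dotC u (s + pt n g)
            = (sg g * dotC u (s + pt n g)) * sg f by ring]
      _ = 0 := sum_zero_aux (by omega) _ _
  have z2 : (∑ f : Fin (k' + 1) → Bool, ∑ g : Fin (l' + 1) → Bool,
      ((sg f * sg g) * dotC v (r + pt m f)) • T u (r + pt m f)) = 0 := by
    refine Finset.sum_eq_zero fun f _ => ?_
    calc ∑ g : Fin (l' + 1) → Bool, ((sg f * sg g) * dotC v (r + pt m f)) • T u (r + pt m f)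
        = ∑ g : Fin (l' + 1) → Bool,
            ((sg f * dotC v (r + pt m f)) * sg g) • T u (r + pt m f) :=
          Finset.sum_congr rfl fun g _ => by rw [show (sg f * sg g) * dotC v (r + pt m f)
            = (sg f * dotC v (r + pt m f)) * sg g by ring]
      _ = 0 := sum_zero_aux (by omega) _ _
  rw [z1, z2, sub_zero, zero_add]
  refine sub_mem ?_ ?_
  · have e3 : (∑ f : Fin (k' + 1) → Bool, ∑ g : Fin (l' + 1) → Bool,
        ((sg f * sg g) * dotC v (r + pt m f)) • T u (((r + s) + pt n g) + pt m f))
        = ∑ g : Fin (l' + 1) → Bool, ∑ f : Fin (k' + 1) → Bool,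
            ((sg g * sg f) * dotC v (r + pt m f)) • T u (((r + s) + pt n g) + pt m f) := by
      rw [Finset.sum_comm]
      exact Finset.sum_congr rfl fun g _ => Finset.sum_congr rfl fun f _ => by
        rw [mul_comm (sg f) (sg g)]
    rw [e3]
    exact memX T k' (l' + 1) u v (r + s) r m n
  · have m4 := memX T l' (k' + 1) v u (r + s) s n m
    rw [show l' + (k' + 1) = k' + l' + 1 by omega] at m4
    exact m4

end IkAux

/-- For all `k, ℓ ≥ 1`, `[I_k, I_ℓ] ⊆ I_{k+ℓ−1}`. -/
theorem Ik_bracket_Il (d : ℕ) (hd : 2 ≤ d)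
    (L : Type*) [LieRing L] [LieAlgebra ℂ L]
    (T : (Fin d → ℂ) → (Fin d → ℤ) → L)
    (hlin : ∀ r : Fin d → ℤ, IsLinearMap ℂ (fun u => T u r))
    (hzero : ∀ u : Fin d → ℂ, T u 0 = 0)
    (hind : LinearIndependent ℂ
      (fun p : Fin d × {r : Fin d → ℤ // r ≠ 0} => T (Pi.single p.1 1) p.2.1))
    (hspan : Submodule.span ℂ
      (Set.range fun p : Fin d × {r : Fin d → ℤ // r ≠ 0} =>
        T (Pi.single p.1 1) p.2.1) = ⊤)
    (hbr : ∀ (u v : Fin d → ℂ) (r s : Fin d → ℤ),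
      ⁅T v s, T u r⁆
        = (∑ i, u i * (s i : ℂ)) • T v s - (∑ i, v i * (r i : ℂ)) • T u r
          + T ((∑ i, v i * (r i : ℂ)) • u - (∑ i, u i * (s i : ℂ)) • v) (r + s))
    (k l : ℕ) (hk : 1 ≤ k) (hl : 1 ≤ l) :
    ∀ x ∈ Ik T l, ∀ y ∈ Ik T k, ⁅x, y⁆ ∈ Ik T (k + l - 1) := by
  obtain ⟨k', rfl⟩ : ∃ k', k = k' + 1 := ⟨k - 1, by omega⟩
  obtain ⟨l', rfl⟩ : ∃ l', l = l' + 1 := ⟨l - 1, by omega⟩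
  rw [show k' + 1 + (l' + 1) - 1 = k' + l' + 1 by omega]
  intro x hx
  refine Submodule.span_induction
    (p := fun x _ => ∀ y ∈ Ik T (k' + 1), ⁅x, y⁆ ∈ Ik T (k' + l' + 1)) ?_ ?_ ?_ ?_ hx
  · rintro x ⟨v, sv, n, rfl⟩ y hy
    refine Submodule.span_induction
      (p := fun y _ => ⁅Tk T (l' + 1) v sv n, y⁆ ∈ Ik T (k' + l' + 1)) ?_ ?_ ?_ ?_ hy
    · rintro y ⟨u, ru, m, rfl⟩
      exact IkAux.gen_bracket T hlin hbr k' l' u v ru sv m n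
    · show ⁅Tk T (l' + 1) v sv n, (0 : L)⁆ ∈ Ik T (k' + l' + 1)
      rw [lie_zero]; exact Submodule.zero_mem _
    · intro a b _ _ ha hb
      show ⁅Tk T (l' + 1) v sv n, a + b⁆ ∈ Ik T (k' + l' + 1)
      rw [lie_add]; exact Submodule.add_mem _ ha hb
    · intro c a _ ha
      show ⁅Tk T (l' + 1) v sv n, c • a⁆ ∈ Ik T (k' + l' + 1)
      rw [lie_smul]; exact Submodule.smul_mem _ _ ha
  · intro y _
    show ⁅(0 : L), y⁆ ∈ Ik T (k' + l' + 1)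
    rw [zero_lie]; exact Submodule.zero_mem _
  · intro a b _ _ ha hb y hy
    show ⁅a + b, y⁆ ∈ Ik T (k' + l' + 1)
    rw [add_lie]; exact Submodule.add_mem _ (ha y hy) (hb y hy)
  · intro c a _ ha y hy
    show ⁅c • a, y⁆ ∈ Ik T (k' + l' + 1)
    rw [smul_lie]; exact Submodule.smul_mem _ _ (ha y hy)
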